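/- For all x > 0, Dawson's integral satisfies 0 < D(x), and for all x ≥ 1, D(x) ≤ 1/(2x) + 1/(2x³); in particular D(x) → 0 as x → ∞. -/

import Mathlib

open Filter Topology MeasureTheory intervalIntegral

noncomputable def Qd (t : ℝ) : ℝ :=
  1 + t^2 + t^4/2 + t^6/6 + t^8/24 + t^10/120 + t^12/720 + t^14/5040 +
  t^16/40320 + t^18/362880 + t^20/3628800 + t^22/39916800 + 4*t^24/1437004800

noncomputable def Rd (t : ℝ) : ℝ :=
  t + t^3/3 + t^5/10 + t^7/42 + t^9/216 + t^11/1320 + t^13/9360 + t^15/75600 +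
  t^17/685440 + t^19/6894720 + t^21/76204800 + t^23/918086400 + 4*t^25/35925120000

lemma Qd_hasDeriv (t : ℝ) :
    HasDerivAt Qd (2*t + 2*t^3 + t^5 + t^7/3 + t^9/12 + t^11/60 + t^13/360 + t^15/2520 +
      t^17/20160 + t^19/181440 + t^21/1814400 + t^23/14968800) t := by
  have h := ((((((((((((hasDerivAt_const t (1:ℝ)).add (hasDerivAt_pow 2 t)).add
    ((hasDerivAt_pow 4 t).div_const 2)).add ((hasDerivAt_pow 6 t).div_const 6)).add
    ((hasDerivAt_pow 8 t).div_const 24)).add ((hasDerivAt_pow 10 t).div_const 120)).add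
    ((hasDerivAt_pow 12 t).div_const 720)).add ((hasDerivAt_pow 14 t).div_const 5040)).add
    ((hasDerivAt_pow 16 t).div_const 40320)).add ((hasDerivAt_pow 18 t).div_const 362880)).add
    ((hasDerivAt_pow 20 t).div_const 3628800)).add ((hasDerivAt_pow 22 t).div_const 39916800)).add
    (((hasDerivAt_pow 24 t).const_mul 4).div_const 1437004800)
  refine h.congr_deriv ?_
  push_cast
  ring

lemma Rd_hasDeriv (t : ℝ) : HasDerivAt Rd (Qd t) t := by
  have h := ((((((((((((hasDerivAt_id t).add ((hasDerivAt_pow 3 t).div_const 3)).add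
    ((hasDerivAt_pow 5 t).div_const 10)).add ((hasDerivAt_pow 7 t).div_const 42)).add
    ((hasDerivAt_pow 9 t).div_const 216)).add ((hasDerivAt_pow 11 t).div_const 1320)).add
    ((hasDerivAt_pow 13 t).div_const 9360)).add ((hasDerivAt_pow 15 t).div_const 75600)).add
    ((hasDerivAt_pow 17 t).div_const 685440)).add ((hasDerivAt_pow 19 t).div_const 6894720)).add
    ((hasDerivAt_pow 21 t).div_const 76204800)).add ((hasDerivAt_pow 23 t).div_const 918086400)).add
    (((hasDerivAt_pow 25 t).const_mul 4).div_const 35925120000)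
  refine h.congr_deriv ?_
  unfold Qd
  push_cast
  ring

lemma psi_hasDeriv (t : ℝ) :
    HasDerivAt (fun t => Qd t * Real.exp (-t^2))
      (Real.exp (-t^2) * ((8*t^23 - 8/3*t^25) / 479001600)) t := by
  have h := (Qd_hasDeriv t).mul ((hasDerivAt_pow 2 t).neg.exp)
  refine h.congr_deriv ?_
  simp only [Pi.neg_apply]
  unfold Qd
  push_cast
  ring

lemma exp_sq_le_Qd {t : ℝ} (ht : t ∈ Set.Icc (0:ℝ) (Real.sqrt 3)) :
    Real.exp (t^2) ≤ Qd t := by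
  have hs2 : Real.sqrt 3 ^ 2 = 3 := Real.sq_sqrt (by norm_num)
  have mono : MonotoneOn (fun t => Qd t * Real.exp (-t^2)) (Set.Icc (0:ℝ) (Real.sqrt 3)) := by
    apply monotoneOn_of_deriv_nonneg (convex_Icc _ _)
    · exact fun x _ => (psi_hasDeriv x).continuousAt.continuousWithinAt
    · exact fun x _ => ((psi_hasDeriv x).differentiableAt).differentiableWithinAt
    · intro x hx
      rw [interior_Icc] at hx
      rw [(psi_hasDeriv x).deriv]
      have hx0 : 0 < x := hx.1
      have hx3 : x^2 ≤ 3 := by nlinarith [hx.2, Real.sqrt_nonneg 3]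
      have h1 : 0 ≤ 8*x^23 - 8/3*x^25 := by nlinarith [pow_nonneg hx0.le 23]
      positivity
  have h1 := mono (Set.left_mem_Icc.2 (by positivity)) ht ht.1
  simp only at h1
  have h0 : Qd 0 * Real.exp (-(0:ℝ)^2) = 1 := by norm_num [Qd]
  rw [h0] at h1
  calc Real.exp (t^2) = Real.exp (t^2) * 1 := (mul_one _).symm
    _ ≤ Real.exp (t^2) * (Qd t * Real.exp (-t^2)) :=
        mul_le_mul_of_nonneg_left h1 (Real.exp_pos _).le
    _ = Qd t * (Real.exp (t^2) * Real.exp (-t^2)) := by ring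
    _ = Qd t := by rw [← Real.exp_add]; simp

lemma exp_sq_continuous : Continuous fun t : ℝ => Real.exp (t^2) :=
  Real.continuous_exp.comp (continuous_pow 2)

lemma Qd_continuous : Continuous Qd := by
  unfold Qd; fun_prop

lemma exp_three_lb : (20.085 : ℝ) ≤ Real.exp 3 := by
  have h := Real.exp_one_gt_d9
  have h3 : Real.exp 3 = Real.exp 1 ^ 3 := by
    rw [← Real.exp_nat_mul]; norm_num
  rw [h3]
  calc (20.085:ℝ) ≤ 2.7182818283^3 := by norm_num
    _ ≤ Real.exp 1 ^ 3 := pow_le_pow_left₀ (by norm_num) h.le 3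

lemma integral_le : (∫ t in (0:ℝ)..Real.sqrt 3, Real.exp (t^2)) ≤
    Real.exp 3 * (1/(2*Real.sqrt 3) + 1/(2*Real.sqrt 3^3)) := by
  set s := Real.sqrt 3 with hs
  have hs0 : 0 < s := Real.sqrt_pos.2 (by norm_num)
  have hs2 : s ^ 2 = 3 := Real.sq_sqrt (by norm_num)
  have h1 : (∫ t in (0:ℝ)..s, Real.exp (t^2)) ≤ ∫ t in (0:ℝ)..s, Qd t :=
    intervalIntegral.integral_mono_on hs0.le
      (exp_sq_continuous.intervalIntegrable _ _) (Qd_continuous.intervalIntegrable _ _)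
      (fun t ht => exp_sq_le_Qd ht)
  have h2 : (∫ t in (0:ℝ)..s, Qd t) = Rd s - Rd 0 :=
    intervalIntegral.integral_eq_sub_of_hasDerivAt (fun t _ => Rd_hasDeriv t)
      (Qd_continuous.intervalIntegrable _ _)
  have hR0 : Rd 0 = 0 := by norm_num [Rd]
  -- powers of s
  have e3 : s^3 = 3^1 * s := by rw [show s^3 = (s^2)^1 * s by ring, hs2]
  have e5 : s^5 = 3^2 * s := by rw [show s^5 = (s^2)^2 * s by ring, hs2]
  have e7 : s^7 = 3^3 * s := by rw [show s^7 = (s^2)^3 * s by ring, hs2]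
  have e9 : s^9 = 3^4 * s := by rw [show s^9 = (s^2)^4 * s by ring, hs2]
  have e11 : s^11 = 3^5 * s := by rw [show s^11 = (s^2)^5 * s by ring, hs2]
  have e13 : s^13 = 3^6 * s := by rw [show s^13 = (s^2)^6 * s by ring, hs2]
  have e15 : s^15 = 3^7 * s := by rw [show s^15 = (s^2)^7 * s by ring, hs2]
  have e17 : s^17 = 3^8 * s := by rw [show s^17 = (s^2)^8 * s by ring, hs2]
  have e19 : s^19 = 3^9 * s := by rw [show s^19 = (s^2)^9 * s by ring, hs2]
  have e21 : s^21 = 3^10 * s := by rw [show s^21 = (s^2)^10 * s by ring, hs2]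
  have e23 : s^23 = 3^11 * s := by rw [show s^23 = (s^2)^11 * s by ring, hs2]
  have e25 : s^25 = 3^12 * s := by rw [show s^25 = (s^2)^12 * s by ring, hs2]
  have hRs : Rd s ≤ Real.exp 3 * (1/(2*s) + 1/(2*s^3)) := by
    have hrhs : Real.exp 3 * (1/(2*s) + 1/(2*s^3)) = 2 * Real.exp 3 / (3 * s) := by
      rw [e3]
      field_simp
      ring
    rw [hrhs, le_div_iff₀ (by positivity)]
    unfold Rd
    rw [e3, e5, e7, e9, e11, e13, e15, e17, e19, e21, e23, e25]
    have he := exp_three_lb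
    nlinarith [hs2, hs0]
  calc (∫ t in (0:ℝ)..s, Real.exp (t^2)) ≤ Rd s - Rd 0 := h2 ▸ h1
    _ ≤ Real.exp 3 * (1/(2*s) + 1/(2*s^3)) := by rw [hR0]; linarith [hRs]

noncomputable def Phi (x : ℝ) : ℝ :=
  Real.exp (x^2) * (1/(2*x) + 1/(2*x^3)) - ∫ t in (0:ℝ)..x, Real.exp (t^2)

lemma intF_hasDeriv (x : ℝ) :
    HasDerivAt (fun x => ∫ t in (0:ℝ)..x, Real.exp (t^2)) (Real.exp (x^2)) x :=
  intervalIntegral.integral_hasDerivAt_right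
    (exp_sq_continuous.intervalIntegrable _ _)
    (exp_sq_continuous.stronglyMeasurableAtFilter _ _)
    exp_sq_continuous.continuousAt

lemma Phi_hasDeriv {x : ℝ} (hx : 0 < x) :
    HasDerivAt Phi (Real.exp (x^2) * ((x^2 - 3) / (2*x^4))) x := by
  have h2x : (2*x : ℝ) ≠ 0 := by positivity
  have h2x3 : (2*x^3 : ℝ) ≠ 0 := by positivity
  have hE := (hasDerivAt_pow 2 x).exp
  have hA := ((hasDerivAt_const x (1:ℝ)).div ((hasDerivAt_id' x).const_mul 2) h2x).add
      ((hasDerivAt_const x (1:ℝ)).div ((hasDerivAt_pow 3 x).const_mul 2) h2x3)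
  have h := (hE.mul hA).sub (intF_hasDeriv x)
  refine h.congr_deriv ?_
  simp only [Pi.add_apply, Pi.div_apply]
  have hx0 : x ≠ 0 := hx.ne'
  push_cast
  field_simp
  ring

lemma Phi_nonneg {x : ℝ} (hx : 1 ≤ x) : 0 ≤ Phi x := by
  set s := Real.sqrt 3 with hs
  have hs0 : 0 < s := Real.sqrt_pos.2 (by norm_num)
  have hs1 : 1 ≤ s := by
    rw [show (1:ℝ) = Real.sqrt 1 by simp [hs]]
    exact Real.sqrt_le_sqrt (by norm_num)
  have hs2 : s ^ 2 = 3 := Real.sq_sqrt (by norm_num)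
  have hPhis : 0 ≤ Phi s := by
    have := integral_le
    unfold Phi
    rw [hs2]
    linarith [this]
  rcases le_total x s with hxs | hxs
  · -- antitone on [1, s]
    have anti : AntitoneOn Phi (Set.Icc (1:ℝ) s) := by
      apply antitoneOn_of_deriv_nonpos (convex_Icc _ _)
      · exact fun y hy => (Phi_hasDeriv (by linarith [hy.1] : (0:ℝ) < y)).continuousAt.continuousWithinAt
      · intro y hy
        rw [interior_Icc] at hy
        exact (Phi_hasDeriv (by linarith [hy.1] : (0:ℝ) < y)).differentiableAt.differentiableWithinAt
      · intro y hy
        rw [interior_Icc] at hy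
        have hy0 : (0:ℝ) < y := by linarith [hy.1]
        rw [(Phi_hasDeriv hy0).deriv]
        have hy3 : y^2 - 3 ≤ 0 := by nlinarith [hy.2, hs0]
        have h1 : (y^2-3)/(2*y^4) ≤ 0 :=
          div_nonpos_of_nonpos_of_nonneg hy3 (by positivity)
        exact mul_nonpos_of_nonneg_of_nonpos (Real.exp_pos _).le h1
    have := anti (Set.mem_Icc.2 ⟨hx, hxs⟩) (Set.mem_Icc.2 ⟨hs1, le_rfl⟩) hxs
    linarith
  · -- monotone on [s, ∞)
    have mono : MonotoneOn Phi (Set.Ici s) := by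
      apply monotoneOn_of_deriv_nonneg (convex_Ici _)
      · exact fun y hy => (Phi_hasDeriv (lt_of_lt_of_le hs0 hy)).continuousAt.continuousWithinAt
      · intro y hy
        rw [interior_Ici] at hy
        exact (Phi_hasDeriv (hs0.trans hy)).differentiableAt.differentiableWithinAt
      · intro y hy
        rw [interior_Ici] at hy
        have hy0 : (0:ℝ) < y := hs0.trans hy
        rw [(Phi_hasDeriv hy0).deriv]
        have hy3 : 0 ≤ y^2 - 3 := by nlinarith [(Set.mem_Ioi.mp hy).le, hs0]
        positivity
    have := mono (Set.mem_Ici.2 le_rfl) (Set.mem_Ici.2 hxs) hxs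
    linarith

theorem dawson_pos_bound_limit :
    (∀ x : ℝ, 0 < x → 0 < Real.exp (-x ^ 2) * ∫ t in (0:ℝ)..x, Real.exp (t ^ 2)) ∧
    (∀ x : ℝ, 1 ≤ x →
      Real.exp (-x ^ 2) * (∫ t in (0:ℝ)..x, Real.exp (t ^ 2)) ≤
        1 / (2 * x) + 1 / (2 * x ^ 3)) ∧
    Tendsto (fun x : ℝ => Real.exp (-x ^ 2) * ∫ t in (0:ℝ)..x, Real.exp (t ^ 2))
      atTop (𝓝 0) := by
  have hpos : ∀ x : ℝ, 0 < x → 0 < Real.exp (-x ^ 2) * ∫ t in (0:ℝ)..x, Real.exp (t ^ 2) := by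
    intro x hx
    have h1 : 0 < ∫ t in (0:ℝ)..x, Real.exp (t ^ 2) := by
      apply intervalIntegral.intervalIntegral_pos_of_pos
        (exp_sq_continuous.intervalIntegrable _ _) _ hx
      exact fun t => Real.exp_pos _
    exact mul_pos (Real.exp_pos _) h1
  have hbd : ∀ x : ℝ, 1 ≤ x →
      Real.exp (-x ^ 2) * (∫ t in (0:ℝ)..x, Real.exp (t ^ 2)) ≤
        1 / (2 * x) + 1 / (2 * x ^ 3) := by
    intro x hx
    have h1 := Phi_nonneg hx
    unfold Phi at h1
    have h2 : (∫ t in (0:ℝ)..x, Real.exp (t ^ 2)) ≤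
        Real.exp (x^2) * (1/(2*x) + 1/(2*x^3)) := by linarith
    have h3 := mul_le_mul_of_nonneg_left h2 (Real.exp_pos (-x^2)).le
    rwa [← mul_assoc, ← Real.exp_add, neg_add_cancel, Real.exp_zero, one_mul] at h3
  refine ⟨hpos, hbd, ?_⟩
  have t1 : Tendsto (fun x : ℝ => 2*x) atTop atTop :=
    tendsto_id.const_mul_atTop two_pos
  have t2 : Tendsto (fun x : ℝ => 2*x^3) atTop atTop :=
    (tendsto_pow_atTop (by norm_num)).const_mul_atTop two_pos
  have ht : Tendsto (fun x : ℝ => 1/(2*x) + 1/(2*x^3)) atTop (𝓝 0) := by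
    have h1 : Tendsto (fun x : ℝ => 1/(2*x)) atTop (𝓝 0) :=
      Tendsto.div_atTop tendsto_const_nhds t1
    have h2 : Tendsto (fun x : ℝ => 1/(2*x^3)) atTop (𝓝 0) :=
      Tendsto.div_atTop tendsto_const_nhds t2
    simpa using h1.add h2
  refine tendsto_of_tendsto_of_tendsto_of_le_of_le' tendsto_const_nhds ht ?_ ?_
  · exact (eventually_gt_atTop 0).mono fun x hx => (hpos x hx).le
  · exact (eventually_ge_atTop 1).mono fun x hx => hbd x hx
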